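/- Let m be a natural number, let Q be the quadratic form on Fin m → ℝ given by Q x = −∑_i (x i)^2, and work in the Clifford algebra CliffordAlgebra Q, with c i := ι (e i) the image of the i-th standard basis vector (so c i * c j + c j * c i = −2 if i = j and = 0 otherwise). Let R : Fin m → Fin m → Fin m → Fin m → ℝ satisfy the curvature symmetries R i j k l = −R j i k l, R i j k l = −R i j l k, R i j k l = R k l i j, and the first Bianchi identity R i j k l + R j k i l + R k i j l = 0, and let a : Fin m → ℝ. Then in CliffordAlgebra Q one has ∑_{i,j,k,l} (a i * a j * a k * a l * R i j k l) • (c i * c j * c k * c l) = (2 * ∑_{i,j} (a i)^2 * (a j)^2 * R i j j i) • 1. -/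
import Mathlib

private lemma rot3 {M : Type*} [AddCommMonoid M] {n : ℕ}
    (f : Fin n → Fin n → Fin n → M) :
    ∑ i, ∑ j, ∑ k, f i j k = ∑ i, ∑ j, ∑ k, f k i j :=
  Finset.sum_comm.trans (Finset.sum_congr rfl fun _ _ => Finset.sum_comm)

open CliffordAlgebra in
private lemma clifford_aux (m : ℕ) (Q : QuadraticForm ℝ (Fin m → ℝ))
    (hQ : ∀ x, Q x = -∑ i, (x i) ^ 2)
    (c : Fin m → CliffordAlgebra Q) (hc : ∀ i, c i = ι Q (Pi.single i 1))
    (R : Fin m → Fin m → Fin m → Fin m → ℝ)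
    (hR1 : ∀ i j k l, R i j k l = -R j i k l)
    (hR2 : ∀ i j k l, R i j k l = -R i j l k)
    (hR3 : ∀ i j k l, R i j k l = R k l i j)
    (hBianchi : ∀ i j k l, R i j k l + R j k i l + R k i j l = 0) :
    ∑ i, ∑ j, ∑ k, ∑ l, R i j k l • (c i * c j * c k * c l)
      = (2 * ∑ i, ∑ j, R i j j i) • (1 : CliffordAlgebra Q) := by
  classical
  -- the basic anticommutation relation
  have hcc : ∀ i j, c i * c j + c j * c i
      = ((-2 : ℝ) * (if i = j then 1 else 0)) • (1 : CliffordAlgebra Q) := by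
    intro i j
    rw [hc, hc, CliffordAlgebra.ι_mul_ι_add_swap, Algebra.algebraMap_eq_smul_one]
    congr 1
    show Q (Pi.single i 1 + Pi.single j 1) - Q (Pi.single i 1) - Q (Pi.single j 1) = _
    rw [hQ, hQ, hQ]
    have hs : ∀ i : Fin m, ∑ t : Fin m, (Pi.single i (1:ℝ) t)^2 = (1:ℝ) := by
      intro i; simp [Pi.single_apply]
    have hmix : ∑ t : Fin m, Pi.single i (1:ℝ) t * Pi.single j 1 t
        = if i = j then (1:ℝ) else 0 := by
      by_cases h : i = j
      · simp [h, Pi.single_apply]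
      · simp [h, Pi.single_apply, Ne.symm h]
    have expand : ∑ t : Fin m, ((Pi.single i (1:ℝ) + Pi.single j 1 : Fin m → ℝ) t)^2
        = ∑ t : Fin m, ((Pi.single i (1:ℝ) t)^2 + 2*(Pi.single i 1 t * Pi.single j 1 t)
            + (Pi.single j 1 t)^2) :=
      Finset.sum_congr rfl fun t _ => by simp only [Pi.add_apply]; ring
    rw [expand]
    rw [Finset.sum_add_distrib, Finset.sum_add_distrib, hs, hs, ← Finset.mul_sum, hmix]
    by_cases h : i = j <;> simp [h]
  have hsw : ∀ i j, c j * c i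
      = ((-2:ℝ) * (if i = j then 1 else 0)) • (1 : CliffordAlgebra Q) - c i * c j :=
    fun i j => eq_sub_of_add_eq' (hcc i j)
  have e1 : ∀ i j k, c k * c i * c j
      = ((-2:ℝ)*(if i = k then 1 else 0)) • c j - ((-2:ℝ)*(if j = k then 1 else 0)) • c i
        + c i * c j * c k := by
    intro i j k
    rw [hsw i k, sub_mul, smul_mul_assoc, one_mul, mul_assoc, hsw j k, mul_sub,
      mul_smul_comm, mul_one, ← mul_assoc]
    module
  have e2 : ∀ i j k, c j * c k * c i
      = ((-2:ℝ)*(if i = k then 1 else 0)) • c j - ((-2:ℝ)*(if i = j then 1 else 0)) • c k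
        + c i * c j * c k := by
    intro i j k
    rw [mul_assoc, hsw i k, mul_sub, mul_smul_comm, mul_one, ← mul_assoc, hsw i j,
      sub_mul, smul_mul_assoc, one_mul]
    module
  -- the key cubic identity, consequence of the first Bianchi identity
  have keyC : ∀ l, ∑ i, ∑ j, ∑ k, R i j k l • (c i * c j * c k)
      = ∑ i, ∑ j, ((2:ℝ) * R i j i l) • c j := by
    intro l
    have I1 : (∑ i, ∑ j, ∑ k, R i j k l • (c i * c j * c k))
        + (∑ i, ∑ j, ∑ k, R j k i l • (c i * c j * c k))
        + (∑ i, ∑ j, ∑ k, R k i j l • (c i * c j * c k)) = 0 := by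
      simp only [← Finset.sum_add_distrib]
      apply Finset.sum_eq_zero; intro i _
      apply Finset.sum_eq_zero; intro j _
      apply Finset.sum_eq_zero; intro k _
      rw [← add_smul, ← add_smul, hBianchi i j k l, zero_smul]
    have h2 : ∑ i, ∑ j, ∑ k, R i j k l • (c k * c i * c j)
        = ∑ i, ∑ j, ∑ k, R j k i l • (c i * c j * c k) :=
      (rot3 (fun a b c' => R b c' a l • (c a * c b * c c'))).symm
    have h3 : ∑ i, ∑ j, ∑ k, R i j k l • (c j * c k * c i)
        = ∑ i, ∑ j, ∑ k, R k i j l • (c i * c j * c k) :=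
      rot3 (fun a b c' => R a b c' l • (c b * c c' * c a))
    have I2 : (∑ i, ∑ j, ∑ k, R i j k l • (c i * c j * c k))
        + (∑ i, ∑ j, ∑ k, R i j k l • (c k * c i * c j))
        + (∑ i, ∑ j, ∑ k, R i j k l • (c j * c k * c i)) = 0 := by
      rw [h2, h3]; exact I1
    have hA : ∑ i, ∑ j, ∑ k, R i j k l • (c k * c i * c j)
        = (∑ i, ∑ j, ∑ k, (R i j k l * ((-2:ℝ)*(if i = k then 1 else 0))) • c j)
          - (∑ i, ∑ j, ∑ k, (R i j k l * ((-2:ℝ)*(if j = k then 1 else 0))) • c i)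
          + ∑ i, ∑ j, ∑ k, R i j k l • (c i * c j * c k) := by
      have pt : ∀ i j k, R i j k l • (c k * c i * c j)
          = (R i j k l * ((-2:ℝ)*(if i = k then 1 else 0))) • c j
            - (R i j k l * ((-2:ℝ)*(if j = k then 1 else 0))) • c i
            + R i j k l • (c i * c j * c k) := by
        intro i j k; rw [e1 i j k, smul_add, smul_sub, smul_smul, smul_smul]
      simp only [pt, Finset.sum_add_distrib, Finset.sum_sub_distrib]
    have hB : ∑ i, ∑ j, ∑ k, R i j k l • (c j * c k * c i)
        = (∑ i, ∑ j, ∑ k, (R i j k l * ((-2:ℝ)*(if i = k then 1 else 0))) • c j)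
          - (∑ i, ∑ j, ∑ k, (R i j k l * ((-2:ℝ)*(if i = j then 1 else 0))) • c k)
          + ∑ i, ∑ j, ∑ k, R i j k l • (c i * c j * c k) := by
      have pt : ∀ i j k, R i j k l • (c j * c k * c i)
          = (R i j k l * ((-2:ℝ)*(if i = k then 1 else 0))) • c j
            - (R i j k l * ((-2:ℝ)*(if i = j then 1 else 0))) • c k
            + R i j k l • (c i * c j * c k) := by
        intro i j k; rw [e2 i j k, smul_add, smul_sub, smul_smul, smul_smul]
      simp only [pt, Finset.sum_add_distrib, Finset.sum_sub_distrib]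
    have colA : ∑ i, ∑ j, ∑ k, (R i j k l * ((-2:ℝ)*(if i = k then 1 else 0))) • c j
        = -∑ i, ∑ j, ((2:ℝ) * R i j i l) • c j := by
      rw [← Finset.sum_neg_distrib]
      refine Finset.sum_congr rfl fun i _ => ?_
      rw [← Finset.sum_neg_distrib]
      refine Finset.sum_congr rfl fun j _ => ?_
      have pt : ∀ k, (R i j k l * ((-2:ℝ)*(if i = k then 1 else 0))) • c j
          = if i = k then (R i j k l * (-2:ℝ)) • c j else 0 := by
        intro k; by_cases h : i = k <;> simp [h]
      simp only [pt, Finset.sum_ite_eq, Finset.mem_univ, if_true]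
      rw [← neg_smul]; congr 1; ring
    have colB : ∑ i, ∑ j, ∑ k, (R i j k l * ((-2:ℝ)*(if j = k then 1 else 0))) • c i
        = ∑ i, ∑ j, ((2:ℝ) * R i j i l) • c j := by
      have step : ∑ i, ∑ j, ∑ k, (R i j k l * ((-2:ℝ)*(if j = k then 1 else 0))) • c i
          = ∑ i, ∑ j, (R i j j l * (-2:ℝ)) • c i := by
        refine Finset.sum_congr rfl fun i _ => Finset.sum_congr rfl fun j _ => ?_
        have pt : ∀ k, (R i j k l * ((-2:ℝ)*(if j = k then 1 else 0))) • c i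
            = if j = k then (R i j k l * (-2:ℝ)) • c i else 0 := by
          intro k; by_cases h : j = k <;> simp [h]
        simp only [pt, Finset.sum_ite_eq, Finset.mem_univ, if_true]
      rw [step, Finset.sum_comm]
      refine Finset.sum_congr rfl fun j _ => Finset.sum_congr rfl fun i _ => ?_
      congr 1
      rw [hR1 i j j l]; ring
    have colC : ∑ i, ∑ j, ∑ k, (R i j k l * ((-2:ℝ)*(if i = j then 1 else 0))) • c k = 0 := by
      apply Finset.sum_eq_zero; intro i _
      rw [Finset.sum_comm]
      apply Finset.sum_eq_zero; intro k _
      have pt : ∀ j, (R i j k l * ((-2:ℝ)*(if i = j then 1 else 0))) • c k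
          = if i = j then (R i j k l * (-2:ℝ)) • c k else 0 := by
        intro j; by_cases h : i = j <;> simp [h]
      simp only [pt, Finset.sum_ite_eq, Finset.mem_univ, if_true]
      have hz : R i i k l = 0 := by linarith [hR1 i i k l]
      simp [hz]
    rw [hA, hB, colA, colB, colC] at I2
    set X := ∑ i, ∑ j, ∑ k, R i j k l • (c i * c j * c k) with hX
    set Y := ∑ i, ∑ j, ((2:ℝ) * R i j i l) • c j with hY
    have h3s : (3:ℝ) • X = (3:ℝ) • Y := by
      have hX3 : (3:ℝ) • X = X + X + X := by module
      have hY3 : (3:ℝ) • Y = Y + Y + Y := by module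
      rw [hX3, hY3]
      calc X + X + X
          = (X + (-Y - Y + X) + (-Y - 0 + X)) + (Y + Y + Y) := by abel
        _ = 0 + (Y + Y + Y) := by rw [I2]
        _ = Y + Y + Y := by rw [zero_add]
    calc X = (3:ℝ)⁻¹ • ((3:ℝ) • X) := by rw [smul_smul]; norm_num
      _ = (3:ℝ)⁻¹ • ((3:ℝ) • Y) := by rw [h3s]
      _ = Y := by rw [smul_smul]; norm_num
  -- reorder the quadruple sum, pulling `l` out
  have reorder : ∑ i, ∑ j, ∑ k, ∑ l, R i j k l • (c i * c j * c k * c l)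
      = ∑ l, ∑ i, ∑ j, ∑ k, R i j k l • (c i * c j * c k * c l) := by
    calc ∑ i, ∑ j, ∑ k, ∑ l, R i j k l • (c i * c j * c k * c l)
        = ∑ i, ∑ j, ∑ l, ∑ k, R i j k l • (c i * c j * c k * c l) :=
          Finset.sum_congr rfl fun i _ => Finset.sum_congr rfl fun j _ => Finset.sum_comm
      _ = ∑ i, ∑ l, ∑ j, ∑ k, R i j k l • (c i * c j * c k * c l) :=
          Finset.sum_congr rfl fun i _ => Finset.sum_comm
      _ = ∑ l, ∑ i, ∑ j, ∑ k, R i j k l • (c i * c j * c k * c l) := Finset.sum_comm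
  have M2 : ∀ l, ∑ i, ∑ j, ∑ k, R i j k l • (c i * c j * c k * c l)
      = ∑ i, ∑ j, ((2:ℝ) * R i j i l) • (c j * c l) := by
    intro l
    calc ∑ i, ∑ j, ∑ k, R i j k l • (c i * c j * c k * c l)
        = (∑ i, ∑ j, ∑ k, R i j k l • (c i * c j * c k)) * c l := by
          simp only [Finset.sum_mul, smul_mul_assoc]
      _ = (∑ i, ∑ j, ((2:ℝ) * R i j i l) • c j) * c l := by rw [keyC l]
      _ = ∑ i, ∑ j, ((2:ℝ) * R i j i l) • (c j * c l) := by
          simp only [Finset.sum_mul, smul_mul_assoc]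
  have hScomm : ∀ j l, (∑ i, (2:ℝ) * R i j i l) = ∑ i, (2:ℝ) * R i l i j :=
    fun j l => Finset.sum_congr rfl fun i _ => by rw [hR3 i j i l]
  have swap2 : ∑ j, ∑ l, (∑ i, (2:ℝ) * R i j i l) • (c j * c l)
      = ∑ j, ∑ l, (∑ i, (2:ℝ) * R i j i l) • (c l * c j) := by
    rw [Finset.sum_comm]
    refine Finset.sum_congr rfl fun j _ => Finset.sum_congr rfl fun l _ => ?_
    congr 1
    exact hScomm l j
  set SW := ∑ j, ∑ l, (∑ i, (2:ℝ) * R i j i l) • (c j * c l) with hSW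
  have W2 : SW + SW = (∑ j, ((∑ i, (2:ℝ) * R i j i j) * (-2:ℝ))) • (1 : CliffordAlgebra Q) := by
    calc SW + SW
        = ∑ j, ∑ l, ((∑ i, (2:ℝ) * R i j i l) • (c j * c l)
            + (∑ i, (2:ℝ) * R i j i l) • (c l * c j)) := by
          nth_rewrite 2 [swap2]
          nth_rewrite 1 [hSW]
          simp only [← Finset.sum_add_distrib]
      _ = ∑ j, ∑ l, ((∑ i, (2:ℝ) * R i j i l) * ((-2:ℝ) * if j = l then 1 else 0)) • 1 :=
          Finset.sum_congr rfl fun j _ => Finset.sum_congr rfl fun l _ => by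
            rw [← smul_add, hcc j l, smul_smul]
      _ = ∑ j, ((∑ i, (2:ℝ) * R i j i j) * (-2:ℝ)) • 1 := by
          refine Finset.sum_congr rfl fun j _ => ?_
          have pt : ∀ l, ((∑ i, (2:ℝ) * R i j i l) * ((-2:ℝ) * if j = l then 1 else 0))
                • (1 : CliffordAlgebra Q)
              = if j = l then ((∑ i, (2:ℝ) * R i j i l) * (-2:ℝ)) • 1 else 0 := by
            intro l; by_cases h : j = l <;> simp [h]
          simp only [pt, Finset.sum_ite_eq, Finset.mem_univ, if_true]
      _ = (∑ j, ((∑ i, (2:ℝ) * R i j i j) * (-2:ℝ))) • 1 := by rw [Finset.sum_smul]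
  have W4 : SW = ((2:ℝ)⁻¹ * ∑ j, ((∑ i, (2:ℝ) * R i j i j) * (-2:ℝ))) • 1 := by
    have h2W : (2:ℝ) • SW = (∑ j, ((∑ i, (2:ℝ) * R i j i j) * (-2:ℝ))) • (1 : CliffordAlgebra Q) := by
      rw [two_smul]; exact W2
    calc SW = (2:ℝ)⁻¹ • ((2:ℝ) • SW) := by rw [smul_smul]; norm_num
      _ = (2:ℝ)⁻¹ • ((∑ j, ((∑ i, (2:ℝ) * R i j i j) * (-2:ℝ))) • (1 : CliffordAlgebra Q)) := by
          rw [h2W]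
      _ = ((2:ℝ)⁻¹ * ∑ j, ((∑ i, (2:ℝ) * R i j i j) * (-2:ℝ))) • 1 := by rw [smul_smul]
  have coeff : (2:ℝ)⁻¹ * ∑ j, ((∑ i, (2:ℝ) * R i j i j) * (-2:ℝ)) = 2 * ∑ i, ∑ j, R i j j i := by
    have e : ∑ j, ((∑ i, (2:ℝ) * R i j i j) * (-2:ℝ)) = ∑ j, ∑ i, (4:ℝ) * R i j j i := by
      refine Finset.sum_congr rfl fun j _ => ?_
      rw [Finset.sum_mul]
      refine Finset.sum_congr rfl fun i _ => ?_
      rw [hR2 i j i j]; ring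
    rw [e, Finset.sum_comm]
    simp only [Finset.mul_sum]
    refine Finset.sum_congr rfl fun i _ => Finset.sum_congr rfl fun j _ => by ring
  calc ∑ i, ∑ j, ∑ k, ∑ l, R i j k l • (c i * c j * c k * c l)
      = ∑ l, ∑ i, ∑ j, ∑ k, R i j k l • (c i * c j * c k * c l) := reorder
    _ = ∑ l, ∑ i, ∑ j, ((2:ℝ) * R i j i l) • (c j * c l) :=
        Finset.sum_congr rfl fun l _ => M2 l
    _ = ∑ i, ∑ j, ∑ l, ((2:ℝ) * R i j i l) • (c j * c l) :=
        rot3 (fun a b c' => ((2:ℝ) * R b c' b a) • (c c' * c a))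
    _ = ∑ j, ∑ l, ∑ i, ((2:ℝ) * R i j i l) • (c j * c l) :=
        rot3 (fun a b c' => ((2:ℝ) * R a b a c') • (c b * c c'))
    _ = SW := by
        rw [hSW]
        exact Finset.sum_congr rfl fun j _ => Finset.sum_congr rfl fun l _ =>
          Finset.sum_smul.symm
    _ = ((2:ℝ)⁻¹ * ∑ j, ((∑ i, (2:ℝ) * R i j i j) * (-2:ℝ))) • 1 := W4
    _ = (2 * ∑ i, ∑ j, R i j j i) • 1 := by rw [coeff]

open CliffordAlgebra in
/-- The Clifford-algebra curvature computation (SecondScalarEst): for a quadratic form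
`Q x = -∑ (x i)²` and a tensor `R` with the symmetries of a Riemannian curvature tensor,
`∑ (aᵢ aⱼ aₖ aₗ R i j k l) • cᵢcⱼcₖcₗ = (2 ∑ aᵢ² aⱼ² R i j j i) • 1`. -/
theorem clifford_curvature_contraction (m : ℕ) (Q : QuadraticForm ℝ (Fin m → ℝ))
    (hQ : ∀ x, Q x = -∑ i, (x i) ^ 2)
    (c : Fin m → CliffordAlgebra Q) (hc : ∀ i, c i = ι Q (Pi.single i 1))
    (R : Fin m → Fin m → Fin m → Fin m → ℝ)
    (hR1 : ∀ i j k l, R i j k l = -R j i k l)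
    (hR2 : ∀ i j k l, R i j k l = -R i j l k)
    (hR3 : ∀ i j k l, R i j k l = R k l i j)
    (hBianchi : ∀ i j k l, R i j k l + R j k i l + R k i j l = 0)
    (a : Fin m → ℝ) :
    ∑ i, ∑ j, ∑ k, ∑ l, (a i * a j * a k * a l * R i j k l) • (c i * c j * c k * c l)
      = (2 * ∑ i, ∑ j, (a i) ^ 2 * (a j) ^ 2 * R i j j i) • (1 : CliffordAlgebra Q) := by
  set S : Fin m → Fin m → Fin m → Fin m → ℝ :=
    fun i j k l => a i * a j * a k * a l * R i j k l with hS
  have h1' : ∀ i j k l, S i j k l = -S j i k l := fun i j k l => by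
    simp only [hS]; linear_combination (a i * a j * a k * a l) * hR1 i j k l
  have h2' : ∀ i j k l, S i j k l = -S i j l k := fun i j k l => by
    simp only [hS]; linear_combination (a i * a j * a k * a l) * hR2 i j k l
  have h3' : ∀ i j k l, S i j k l = S k l i j := fun i j k l => by
    simp only [hS]; linear_combination (a i * a j * a k * a l) * hR3 i j k l
  have hB' : ∀ i j k l, S i j k l + S j k i l + S k i j l = 0 := fun i j k l => by
    simp only [hS]; linear_combination (a i * a j * a k * a l) * hBianchi i j k l
  have key := clifford_aux m Q hQ c hc S h1' h2' h3' hB'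
  refine Eq.trans ?_ (key.trans ?_)
  · exact Finset.sum_congr rfl fun i _ => Finset.sum_congr rfl fun j _ =>
      Finset.sum_congr rfl fun k _ => Finset.sum_congr rfl fun l _ => by
        simp only [hS]
  · congr 1
    congr 1
    refine Finset.sum_congr rfl fun i _ => Finset.sum_congr rfl fun j _ => ?_
    simp only [hS]; ring
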